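/- Any metric TSP instance on n = i+j+k+6 vertices whose optimal fractional subtour LP solution is isomorphic to x_{i,j,k} has integrality ratio at most 1 + 1/(3 + 2(1/(i+1) + 1/(j+1) + 1/(k+1))). -/

import Mathlib

open scoped Classical

/-- Vertex set of the fractional tour `x_{i,j,k}`: the three paths `X`, `Y`, `Z`. -/
def Vtype (i j k : ℕ) : Type := Fin (i + 2) ⊕ Fin (j + 2) ⊕ Fin (k + 2)

instance (i j k : ℕ) : Fintype (Vtype i j k) := by unfold Vtype; infer_instance
instance (i j k : ℕ) : DecidableEq (Vtype i j k) := by unfold Vtype; infer_instance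

/-- The fractional tour `x_{i,j,k}`: weight 1 on consecutive edges along each of the
three paths, weight 1/2 on the six triangle edges, 0 elsewhere. -/
noncomputable def xfrac (i j k : ℕ) : Vtype i j k → Vtype i j k → ℝ
  | Sum.inl s, Sum.inl t => if (s : ℕ) + 1 = t ∨ (t : ℕ) + 1 = s then 1 else 0
  | Sum.inr (Sum.inl s), Sum.inr (Sum.inl t) =>
      if (s : ℕ) + 1 = t ∨ (t : ℕ) + 1 = s then 1 else 0
  | Sum.inr (Sum.inr s), Sum.inr (Sum.inr t) =>
      if (s : ℕ) + 1 = t ∨ (t : ℕ) + 1 = s then 1 else 0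
  | Sum.inl s, Sum.inr (Sum.inl t) =>
      if ((s : ℕ) = 0 ∧ (t : ℕ) = 0) ∨ ((s : ℕ) = i + 1 ∧ (t : ℕ) = j + 1) then 1/2 else 0
  | Sum.inr (Sum.inl t), Sum.inl s =>
      if ((s : ℕ) = 0 ∧ (t : ℕ) = 0) ∨ ((s : ℕ) = i + 1 ∧ (t : ℕ) = j + 1) then 1/2 else 0
  | Sum.inl s, Sum.inr (Sum.inr t) =>
      if ((s : ℕ) = 0 ∧ (t : ℕ) = 0) ∨ ((s : ℕ) = i + 1 ∧ (t : ℕ) = k + 1) then 1/2 else 0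
  | Sum.inr (Sum.inr t), Sum.inl s =>
      if ((s : ℕ) = 0 ∧ (t : ℕ) = 0) ∨ ((s : ℕ) = i + 1 ∧ (t : ℕ) = k + 1) then 1/2 else 0
  | Sum.inr (Sum.inl s), Sum.inr (Sum.inr t) =>
      if ((s : ℕ) = 0 ∧ (t : ℕ) = 0) ∨ ((s : ℕ) = j + 1 ∧ (t : ℕ) = k + 1) then 1/2 else 0
  | Sum.inr (Sum.inr t), Sum.inr (Sum.inl s) =>
      if ((s : ℕ) = 0 ∧ (t : ℕ) = 0) ∨ ((s : ℕ) = j + 1 ∧ (t : ℕ) = k + 1) then 1/2 else 0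

/-- Feasibility for the subtour LP on a complete graph with vertex set `V`. -/
def SubtourFeasible {V : Type*} [Fintype V] (y : V → V → ℝ) : Prop :=
  (∀ v w, y v w = y w v) ∧ (∀ v, y v v = 0) ∧
  (∀ v w, 0 ≤ y v w ∧ y v w ≤ 1) ∧
  (∀ v, ∑ w, y v w = 2) ∧
  (∀ S : Finset V, S.Nonempty → S ≠ Finset.univ →
    2 ≤ ∑ v ∈ S, ∑ w ∈ Sᶜ, y v w)

/-- The cost of a fractional tour `y` with respect to the cost function `c`. -/
noncomputable def lpCost {V : Type*} [Fintype V] (c y : V → V → ℝ) : ℝ :=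
  (1 / 2) * ∑ v, ∑ w, c v w * y v w

/-- The length of the closed tour visiting the entries of `L` in cyclic order. -/
def cycleLength {α : Type*} (d : α → α → ℝ) (L : List α) : ℝ :=
  ((L.zip (L.rotate 1)).map (fun p => d p.1 p.2)).sum


section
variable {α : Type*} (d : α → α → ℝ)


def plen : List α → ℝ
  | a :: b :: t => d a b + plen (b :: t)
  | _ => 0

@[simp] lemma plen_nil : plen d [] = 0 := rfl
@[simp] lemma plen_single (a : α) : plen d [a] = 0 := rfl
lemma plen_cons_cons (a b : α) (t : List α) :
    plen d (a :: b :: t) = d a b + plen d (b :: t) := rfl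

lemma plen_append :
    ∀ (L : List α) (b : α) (M : List α),
      plen d (L ++ b :: M) = plen d (L ++ [b]) + plen d (b :: M)
  | [], b, M => by simp
  | [a], b, M => by simp [plen_cons_cons]
  | a :: a2 :: L', b, M => by
      have := plen_append (a2 :: L') b M
      simp only [List.cons_append, plen_cons_cons] at *
      rw [this]; ring

lemma plen_concat' :
    ∀ (L : List α) (x b : α) (_ : L.getLast? = some x),
      plen d (L ++ [b]) = plen d L + d x b
  | [], x, b, h => by simp at h
  | [a], x, b, h => by simp at h; subst h; simp [plen_cons_cons]
  | a :: a2 :: L', x, b, h => by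
      have h' : (a2 :: L').getLast? = some x := by
        rwa [List.getLast?_cons_cons] at h
      have := plen_concat' (a2 :: L') x b h'
      simp only [List.cons_append, plen_cons_cons] at *
      rw [this]; ring

lemma plen_append' (L M : List α) (x y : α) (hL : L.getLast? = some x)
    (hM : M.head? = some y) : plen d (L ++ M) = plen d L + d x y + plen d M := by
  cases M with
  | nil => simp at hM
  | cons m M' =>
    simp only [List.head?_cons, Option.some.injEq] at hM
    subst hM
    rw [plen_append d L m M', plen_concat' d L x m hL]

lemma plen_reverse (hs : ∀ x y, d x y = d y x) :
    ∀ (L : List α), plen d L.reverse = plen d L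
  | [] => by simp
  | [a] => by simp
  | a :: b :: t => by
      have hrev : (a :: b :: t).reverse = (b :: t).reverse ++ [a] := by simp
      rw [hrev, plen_concat' d _ b a (by rw [List.getLast?_reverse]; rfl),
        plen_reverse hs (b :: t), plen_cons_cons, hs b a]
      ring

lemma cycleLength_eq_plen (a : α) (t : List α) :
    cycleLength d (a :: t) = plen d ((a :: t) ++ [a]) := by
  have key : ∀ (L : List α) (b : α),
      ((L.zip (L.tail ++ [b])).map (fun p => d p.1 p.2)).sum = plen d (L ++ [b]) := by
    intro L
    induction L with
    | nil => intro b; simp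
    | cons c t ih =>
      intro b
      cases t with
      | nil => simp [plen_cons_cons]
      | cons e t' =>
        simp only [List.tail_cons, List.cons_append] at *
        rw [List.zip_cons_cons, List.map_cons, List.sum_cons, plen_cons_cons]
        have := ih b
        rw [this]
  have hrot : (a :: t).rotate 1 = t ++ [a] := by
    rw [List.rotate_cons_succ, List.rotate_zero]
  rw [cycleLength, hrot]
  have := key (a :: t) a
  simpa using this

lemma cycleLength_closed (L : List α) (a z : α) (hh : L.head? = some a)
    (hl : L.getLast? = some z) : cycleLength d L = plen d L + d z a := by
  cases L with
  | nil => simp at hh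
  | cons x t =>
    simp only [List.head?_cons, Option.some.injEq] at hh
    subst hh
    rw [cycleLength_eq_plen, plen_concat' d _ z x hl]


/-- ascending list [f a, f (a+1), ..., f (a+n-1)] -/
def ascL (f : ℕ → α) (a n : ℕ) : List α := (List.range n).map (fun t => f (a + t))

lemma ascL_succ (f : ℕ → α) (a n : ℕ) :
    ascL f a (n+1) = f a :: ascL f (a+1) n := by
  simp only [ascL, List.range_succ_eq_map, List.map_cons, List.map_map, Nat.add_zero]
  congr 1
  apply List.map_congr_left
  intro t _
  simp [Function.comp]; congr 1; omega

@[simp] lemma ascL_length (f : ℕ → α) (a n : ℕ) : (ascL f a n).length = n := by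
  simp [ascL]

lemma ascL_ne_nil (f : ℕ → α) (a n : ℕ) (hn : 0 < n) : ascL f a n ≠ [] := by
  intro h
  have := congrArg List.length h
  simp at this; omega

lemma ascL_head? (f : ℕ → α) (a n : ℕ) :
    (ascL f a (n+1)).head? = some (f a) := by
  rw [ascL_succ]; rfl

lemma ascL_getLast? (f : ℕ → α) (a : ℕ) :
    ∀ n, (ascL f a (n+1)).getLast? = some (f (a+n)) := by
  intro n
  induction n generalizing a with
  | zero => rw [ascL_succ]; rfl
  | succ m ih =>
    rw [ascL_succ, ascL_succ, List.getLast?_cons_cons, ← ascL_succ, ih (a+1)]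
    congr 2; omega

lemma mem_ascL {f : ℕ → α} {a n : ℕ} {v : α} :
    v ∈ ascL f a n ↔ ∃ t, t < n ∧ v = f (a + t) := by
  simp [ascL, eq_comm]

lemma nodup_ascL (f : ℕ → α) (a n : ℕ)
    (hinj : ∀ s t, s < n → t < n → f (a+s) = f (a+t) → s = t) : (ascL f a n).Nodup := by
  apply List.Nodup.map_on _ List.nodup_range
  intro s hs t ht h
  simp only [List.mem_range] at hs ht
  exact hinj s t hs ht h

lemma plen_ascL (f : ℕ → α) :
    ∀ (n a : ℕ), plen d (ascL f a (n+1)) = ∑ t ∈ Finset.range n, d (f (a+t)) (f (a+t+1))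
  | 0, a => by rw [ascL_succ]; simp [plen, ascL]
  | (m+1), a => by
    rw [ascL_succ, ascL_succ, plen_cons_cons, ← ascL_succ, plen_ascL f m (a+1),
      Finset.sum_range_succ']
    have h1 : ∑ t ∈ Finset.range m, d (f (a+1+t)) (f (a+1+t+1))
        = ∑ t ∈ Finset.range m, d (f (a+(t+1))) (f (a+(t+1)+1)) := by
      apply Finset.sum_congr rfl
      intro t _
      have : a+1+t = a+(t+1) := by omega
      rw [this]
    rw [h1]
    simp only [Nat.add_zero]
    ring


lemma head?_append_some {L M : List α} {a : α} (h : L.head? = some a) :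
    (L ++ M).head? = some a := by
  rw [List.head?_append, h]; rfl

lemma getLast?_append_some {L M : List α} {a : α} (h : M.getLast? = some a) :
    (L ++ M).getLast? = some a := by
  rw [List.getLast?_append, h]; rfl

lemma sum_range_split (g : ℕ → ℝ) (a : ℕ) :
    ∀ b, ∑ t ∈ Finset.range (a+b), g t
      = ∑ t ∈ Finset.range a, g t + ∑ t ∈ Finset.range b, g (a+t)
  | 0 => by simp
  | (b+1) => by
    rw [show a + (b+1) = (a+b)+1 from rfl, Finset.sum_range_succ,
      sum_range_split g a b, Finset.sum_range_succ]
    ring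

lemma chainA (hs : ∀ x y, d x y = d y x) (ht : ∀ u v w, d u w ≤ d u v + d v w)
    (f : ℕ → α) (s : ℕ) (w : α) :
    ∀ n, d (f s) w ≤ (∑ t ∈ Finset.range n, d (f (s+t)) (f (s+t+1))) + d (f (s+n)) w
  | 0 => by simp
  | (n+1) => by
    have h1 := chainA hs ht f s w n
    have h2 : d (f (s+n)) w ≤ d (f (s+n)) (f (s+n+1)) + d (f (s+n+1)) w := ht _ _ _
    rw [Finset.sum_range_succ]
    calc d (f s) w ≤ _ + d (f (s+n)) w := h1
    _ ≤ _ := by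
      rw [show s + (n+1) = s+n+1 from rfl]
      linarith

lemma chainB (hs : ∀ x y, d x y = d y x) (ht : ∀ u v w, d u w ≤ d u v + d v w)
    (f : ℕ → α) (w : α) :
    ∀ m, d (f m) w ≤ (∑ t ∈ Finset.range m, d (f t) (f (t+1))) + d (f 0) w
  | 0 => by simp
  | (m+1) => by
    have h1 := chainB hs ht f w m
    have h2 : d (f (m+1)) w ≤ d (f (m+1)) (f m) + d (f m) w := ht _ _ _
    rw [Finset.sum_range_succ]
    have h3 : d (f m) (f (m+1)) = d (f (m+1)) (f m) := hs _ _
    linarith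

end

lemma cover_of_nodup_length {V : Type*} [Fintype V] [DecidableEq V] (L : List V)
    (hnd : L.Nodup) (hlen : L.length = Fintype.card V) : ∀ v, v ∈ L := by
  have h1 : L.toFinset.card = L.length := List.toFinset_card_of_nodup hnd
  have h2 : L.toFinset = Finset.univ := Finset.eq_univ_of_card _ (by rw [h1, hlen])
  intro v
  rw [← List.mem_toFinset, h2]
  exact Finset.mem_univ v


section generic
variable {V : Type*} [Fintype V] [DecidableEq V]
variable (c : V → V → ℝ) (f1 f2 f3 : ℕ → V) (n1 n2 n3 : ℕ)

theorem gapCycle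
    (hs : ∀ x y, c x y = c y x) (ht : ∀ u v w, c u w ≤ c u v + c v w)
    (inj1 : ∀ s t, s ≤ n1+1 → t ≤ n1+1 → f1 s = f1 t → s = t)
    (inj2 : ∀ s t, s ≤ n2+1 → t ≤ n2+1 → f2 s = f2 t → s = t)
    (inj3 : ∀ s t, s ≤ n3+1 → t ≤ n3+1 → f3 s = f3 t → s = t)
    (d12 : ∀ s t, f1 s ≠ f2 t) (d13 : ∀ s t, f1 s ≠ f3 t) (d23 : ∀ s t, f2 s ≠ f3 t)
    (hcard : Fintype.card V = n1+n2+n3+6)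
    (m : ℕ) (hm : m ≤ n1) :
    ∃ L : List V, L.Nodup ∧ (∀ v, v ∈ L) ∧
      cycleLength c L ≤ (∑ t ∈ Finset.range (n2+1), c (f2 t) (f2 (t+1)))
        + (∑ t ∈ Finset.range (n3+1), c (f3 t) (f3 (t+1)))
        + 2 * (∑ t ∈ Finset.range (n1+1), c (f1 t) (f1 (t+1))) - 2 * c (f1 m) (f1 (m+1))
        + c (f2 (n2+1)) (f1 (n1+1)) + c (f1 (n1+1)) (f3 (n3+1))
        + c (f3 0) (f1 0) + c (f1 0) (f2 0) := by
  set A := ascL f2 0 (n2+1+1) with hA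
  set B := (ascL f1 (m+1) ((n1-m)+1)).reverse with hB
  set C := (ascL f3 0 (n3+1+1)).reverse with hC
  set D := ascL f1 0 (m+1) with hD
  have memA : ∀ v, v ∈ A → ∃ t, t ≤ n2+1 ∧ v = f2 t := by
    intro v hv; rw [hA, mem_ascL] at hv
    obtain ⟨t, htl, rfl⟩ := hv; exact ⟨t, by omega, by rw [Nat.zero_add]⟩
  have memB : ∀ v, v ∈ B → ∃ t, m+1 ≤ t ∧ t ≤ n1+1 ∧ v = f1 t := by
    intro v hv; rw [hB, List.mem_reverse, mem_ascL] at hv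
    obtain ⟨t, htl, rfl⟩ := hv; exact ⟨m+1+t, by omega, by omega, rfl⟩
  have memC : ∀ v, v ∈ C → ∃ t, t ≤ n3+1 ∧ v = f3 t := by
    intro v hv; rw [hC, List.mem_reverse, mem_ascL] at hv
    obtain ⟨t, htl, rfl⟩ := hv; exact ⟨t, by omega, by rw [Nat.zero_add]⟩
  have memD : ∀ v, v ∈ D → ∃ t, t ≤ m ∧ v = f1 t := by
    intro v hv; rw [hD, mem_ascL] at hv
    obtain ⟨t, htl, rfl⟩ := hv; exact ⟨t, by omega, by rw [Nat.zero_add]⟩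
  have ndA : A.Nodup := nodup_ascL _ _ _ (fun s t hsx htx hft => by
    have := inj2 (0+s) (0+t) (by omega) (by omega) hft; omega)
  have ndB : B.Nodup := List.nodup_reverse.mpr (nodup_ascL _ _ _ (fun s t hsx htx hft =>
    by have := inj1 (m+1+s) (m+1+t) (by omega) (by omega) hft; omega))
  have ndC : C.Nodup := List.nodup_reverse.mpr (nodup_ascL _ _ _ (fun s t hsx htx hft =>
    by have := inj3 (0+s) (0+t) (by omega) (by omega) hft; omega))
  have ndD : D.Nodup := nodup_ascL _ _ _ (fun s t hsx htx hft =>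
    by have := inj1 (0+s) (0+t) (by omega) (by omega) hft; omega)
  have dAB : A.Disjoint B := by
    intro v hv hv'
    obtain ⟨s, _, e1⟩ := memA v hv; obtain ⟨t, _, _, e2⟩ := memB v hv'
    rw [e2] at e1; exact d12 t s e1
  have dAC : A.Disjoint C := by
    intro v hv hv'
    obtain ⟨s, _, e1⟩ := memA v hv; obtain ⟨t, _, e2⟩ := memC v hv'
    rw [e1] at e2; exact d23 s t e2
  have dAD : A.Disjoint D := by
    intro v hv hv'
    obtain ⟨s, _, e1⟩ := memA v hv; obtain ⟨t, _, e2⟩ := memD v hv'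
    rw [e2] at e1; exact d12 t s e1
  have dBC : B.Disjoint C := by
    intro v hv hv'
    obtain ⟨s, _, _, e1⟩ := memB v hv; obtain ⟨t, _, e2⟩ := memC v hv'
    rw [e1] at e2; exact d13 s t e2
  have dBD : B.Disjoint D := by
    intro v hv hv'
    obtain ⟨s, hs1, hs2, e1⟩ := memB v hv; obtain ⟨t, ht1, e2⟩ := memD v hv'
    rw [e1] at e2
    have := inj1 s t (by omega) (by omega) e2
    omega
  have dCD : C.Disjoint D := by
    intro v hv hv'
    obtain ⟨s, _, e1⟩ := memC v hv; obtain ⟨t, _, e2⟩ := memD v hv'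
    rw [e1] at e2; exact d13 t s e2.symm
  have hnd : (A ++ B ++ C ++ D).Nodup := by
    rw [List.nodup_append, List.nodup_append, List.nodup_append]
    refine ⟨⟨⟨ndA, ndB, fun a ha b hb hab => dAB ha (hab ▸ hb)⟩, ndC, ?_⟩, ndD, ?_⟩
    · intro a ha b hb hab; subst hab; exact (List.disjoint_append_left.mpr ⟨dAC, dBC⟩) ha hb
    · intro a ha b hb hab; subst hab
      exact (List.disjoint_append_left.mpr ⟨List.disjoint_append_left.mpr ⟨dAD, dBD⟩, dCD⟩) ha hb
  have hlen : (A ++ B ++ C ++ D).length = Fintype.card V := by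
    rw [hcard]
    simp only [List.length_append, hA, hB, hC, hD, List.length_reverse, ascL_length]
    omega
  refine ⟨A ++ B ++ C ++ D, hnd, cover_of_nodup_length _ hnd hlen, ?_⟩
  have hhA : A.head? = some (f2 0) := by rw [hA]; exact ascL_head? f2 0 (n2+1)
  have hlA : A.getLast? = some (f2 (n2+1)) := by
    rw [hA, ascL_getLast?, Nat.zero_add]
  have hhB : B.head? = some (f1 (n1+1)) := by
    have e : m+1+(n1-m) = n1+1 := by omega
    rw [hB, List.head?_reverse, ascL_getLast?, e]
  have hlB : B.getLast? = some (f1 (m+1)) := by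
    rw [hB, List.getLast?_reverse, ascL_head?]
  have hhC : C.head? = some (f3 (n3+1)) := by
    rw [hC, List.head?_reverse, ascL_getLast?, Nat.zero_add]
  have hlC : C.getLast? = some (f3 0) := by
    rw [hC, List.getLast?_reverse, ascL_head?]
  have hhD : D.head? = some (f1 0) := by rw [hD]; exact ascL_head? f1 0 m
  have hlD : D.getLast? = some (f1 m) := by
    rw [hD, ascL_getLast?, Nat.zero_add]
  have pA : plen c A = ∑ t ∈ Finset.range (n2+1), c (f2 t) (f2 (t+1)) := by
    rw [hA, plen_ascL]; simp only [Nat.zero_add]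
  have pB : plen c B = ∑ t ∈ Finset.range (n1-m), c (f1 (m+1+t)) (f1 (m+1+t+1)) := by
    rw [hB, plen_reverse c hs, plen_ascL]
  have pC : plen c C = ∑ t ∈ Finset.range (n3+1), c (f3 t) (f3 (t+1)) := by
    rw [hC, plen_reverse c hs, plen_ascL]; simp only [Nat.zero_add]
  have pD : plen c D = ∑ t ∈ Finset.range m, c (f1 t) (f1 (t+1)) := by
    rw [hD, plen_ascL]; simp only [Nat.zero_add]
  have hcyc : cycleLength c (A ++ B ++ C ++ D)
      = plen c A + plen c B + plen c C + plen c D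
        + c (f2 (n2+1)) (f1 (n1+1)) + c (f1 (m+1)) (f3 (n3+1))
        + c (f3 0) (f1 0) + c (f1 m) (f2 0) := by
    rw [cycleLength_closed c _ (f2 0) (f1 m)
      (head?_append_some (head?_append_some (head?_append_some hhA)))
      (getLast?_append_some hlD)]
    rw [plen_append' c (A ++ B ++ C) D (f3 0) (f1 0)
      (getLast?_append_some hlC) hhD]
    rw [plen_append' c (A ++ B) C (f1 (m+1)) (f3 (n3+1))
      (getLast?_append_some hlB) hhC]
    rw [plen_append' c A B (f2 (n2+1)) (f1 (n1+1)) hlA hhB]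
    ring
  have hsplit : ∑ t ∈ Finset.range (n1+1), c (f1 t) (f1 (t+1))
      = (∑ t ∈ Finset.range m, c (f1 t) (f1 (t+1))) + c (f1 m) (f1 (m+1))
        + ∑ t ∈ Finset.range (n1-m), c (f1 (m+1+t)) (f1 (m+1+t+1)) := by
    have e1 : n1+1 = (m+1) + (n1-m) := by omega
    rw [e1, sum_range_split, Finset.sum_range_succ]
  have ineq1 : c (f1 (m+1)) (f3 (n3+1))
      ≤ (∑ t ∈ Finset.range (n1-m), c (f1 (m+1+t)) (f1 (m+1+t+1)))
        + c (f1 (n1+1)) (f3 (n3+1)) := by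
    have h0 := chainA c hs ht f1 (m+1) (f3 (n3+1)) (n1-m)
    have e1 : m+1+(n1-m) = n1+1 := by omega
    rwa [e1] at h0
  have ineq2 : c (f1 m) (f2 0)
      ≤ (∑ t ∈ Finset.range m, c (f1 t) (f1 (t+1))) + c (f1 0) (f2 0) :=
    chainB c hs ht f1 (f2 0) m
  rw [hcyc, pA, pB, pC, pD, hsplit]
  linarith


theorem primeCycle
    (hs : ∀ x y, c x y = c y x) (ht : ∀ u v w, c u w ≤ c u v + c v w)
    (inj1 : ∀ s t, s ≤ n1+1 → t ≤ n1+1 → f1 s = f1 t → s = t)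
    (inj2 : ∀ s t, s ≤ n2+1 → t ≤ n2+1 → f2 s = f2 t → s = t)
    (inj3 : ∀ s t, s ≤ n3+1 → t ≤ n3+1 → f3 s = f3 t → s = t)
    (d12 : ∀ s t, f1 s ≠ f2 t) (d13 : ∀ s t, f1 s ≠ f3 t) (d23 : ∀ s t, f2 s ≠ f3 t)
    (hcard : Fintype.card V = n1+n2+n3+6) :
    ∃ L : List V, L.Nodup ∧ (∀ v, v ∈ L) ∧
      cycleLength c L ≤ (∑ t ∈ Finset.range (n1+1), c (f1 t) (f1 (t+1)))
        + (∑ t ∈ Finset.range (n2+1), c (f2 t) (f2 (t+1)))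
        + 2 * (∑ t ∈ Finset.range (n3+1), c (f3 t) (f3 (t+1)))
        + c (f1 (n1+1)) (f3 (n3+1)) + c (f3 (n3+1)) (f2 (n2+1)) + c (f2 0) (f1 0) := by
  set A := ascL f1 0 (n1+1+1) with hA
  set B := (ascL f3 0 (n3+1+1)).reverse with hB
  set C := (ascL f2 0 (n2+1+1)).reverse with hC
  have memA : ∀ v, v ∈ A → ∃ t, t ≤ n1+1 ∧ v = f1 t := by
    intro v hv; rw [hA, mem_ascL] at hv
    obtain ⟨t, htl, rfl⟩ := hv; exact ⟨t, by omega, by rw [Nat.zero_add]⟩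
  have memB : ∀ v, v ∈ B → ∃ t, t ≤ n3+1 ∧ v = f3 t := by
    intro v hv; rw [hB, List.mem_reverse, mem_ascL] at hv
    obtain ⟨t, htl, rfl⟩ := hv; exact ⟨t, by omega, by rw [Nat.zero_add]⟩
  have memC : ∀ v, v ∈ C → ∃ t, t ≤ n2+1 ∧ v = f2 t := by
    intro v hv; rw [hC, List.mem_reverse, mem_ascL] at hv
    obtain ⟨t, htl, rfl⟩ := hv; exact ⟨t, by omega, by rw [Nat.zero_add]⟩
  have ndA : A.Nodup := nodup_ascL _ _ _ (fun s t hsx htx hft => by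
    have := inj1 (0+s) (0+t) (by omega) (by omega) hft; omega)
  have ndB : B.Nodup := List.nodup_reverse.mpr (nodup_ascL _ _ _ (fun s t hsx htx hft =>
    by have := inj3 (0+s) (0+t) (by omega) (by omega) hft; omega))
  have ndC : C.Nodup := List.nodup_reverse.mpr (nodup_ascL _ _ _ (fun s t hsx htx hft =>
    by have := inj2 (0+s) (0+t) (by omega) (by omega) hft; omega))
  have dAB : A.Disjoint B := by
    intro v hv hv'
    obtain ⟨s, _, e1⟩ := memA v hv; obtain ⟨t, _, e2⟩ := memB v hv'
    rw [e1] at e2; exact d13 s t e2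
  have dAC : A.Disjoint C := by
    intro v hv hv'
    obtain ⟨s, _, e1⟩ := memA v hv; obtain ⟨t, _, e2⟩ := memC v hv'
    rw [e1] at e2; exact d12 s t e2
  have dBC : B.Disjoint C := by
    intro v hv hv'
    obtain ⟨s, _, e1⟩ := memB v hv; obtain ⟨t, _, e2⟩ := memC v hv'
    rw [e1] at e2; exact d23 t s e2.symm
  have hnd : (A ++ B ++ C).Nodup := by
    rw [List.nodup_append, List.nodup_append]
    refine ⟨⟨ndA, ndB, fun a ha b hb hab => dAB ha (hab ▸ hb)⟩, ndC, ?_⟩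
    intro a ha b hb hab; subst hab; exact (List.disjoint_append_left.mpr ⟨dAC, dBC⟩) ha hb
  have hlen : (A ++ B ++ C).length = Fintype.card V := by
    rw [hcard]
    simp only [List.length_append, hA, hB, hC, List.length_reverse, ascL_length]
    omega
  refine ⟨A ++ B ++ C, hnd, cover_of_nodup_length _ hnd hlen, ?_⟩
  have hhA : A.head? = some (f1 0) := by rw [hA]; exact ascL_head? f1 0 (n1+1)
  have hlA : A.getLast? = some (f1 (n1+1)) := by
    rw [hA, ascL_getLast?, Nat.zero_add]
  have hhB : B.head? = some (f3 (n3+1)) := by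
    rw [hB, List.head?_reverse, ascL_getLast?, Nat.zero_add]
  have hlB : B.getLast? = some (f3 0) := by
    rw [hB, List.getLast?_reverse, ascL_head?]
  have hhC : C.head? = some (f2 (n2+1)) := by
    rw [hC, List.head?_reverse, ascL_getLast?, Nat.zero_add]
  have hlC : C.getLast? = some (f2 0) := by
    rw [hC, List.getLast?_reverse, ascL_head?]
  have pA : plen c A = ∑ t ∈ Finset.range (n1+1), c (f1 t) (f1 (t+1)) := by
    rw [hA, plen_ascL]; simp only [Nat.zero_add]
  have pB : plen c B = ∑ t ∈ Finset.range (n3+1), c (f3 t) (f3 (t+1)) := by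
    rw [hB, plen_reverse c hs, plen_ascL]; simp only [Nat.zero_add]
  have pC : plen c C = ∑ t ∈ Finset.range (n2+1), c (f2 t) (f2 (t+1)) := by
    rw [hC, plen_reverse c hs, plen_ascL]; simp only [Nat.zero_add]
  have hcyc : cycleLength c (A ++ B ++ C)
      = plen c A + plen c B + plen c C
        + c (f1 (n1+1)) (f3 (n3+1)) + c (f3 0) (f2 (n2+1)) + c (f2 0) (f1 0) := by
    rw [cycleLength_closed c _ (f1 0) (f2 0)
      (head?_append_some (head?_append_some hhA)) (getLast?_append_some hlC)]
    rw [plen_append' c (A ++ B) C (f3 0) (f2 (n2+1)) (getLast?_append_some hlB) hhC]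
    rw [plen_append' c A B (f1 (n1+1)) (f3 (n3+1)) hlA hhB]
    ring
  have ineq1 : c (f3 0) (f2 (n2+1))
      ≤ (∑ t ∈ Finset.range (n3+1), c (f3 t) (f3 (t+1))) + c (f3 (n3+1)) (f2 (n2+1)) := by
    have h0 := chainA c hs ht f3 0 (f2 (n2+1)) (n3+1)
    simp only [Nat.zero_add] at h0
    exact h0
  rw [hcyc, pA, pB, pC]
  linarith

theorem doublePrimeCycle
    (hs : ∀ x y, c x y = c y x) (ht : ∀ u v w, c u w ≤ c u v + c v w)
    (inj1 : ∀ s t, s ≤ n1+1 → t ≤ n1+1 → f1 s = f1 t → s = t)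
    (inj2 : ∀ s t, s ≤ n2+1 → t ≤ n2+1 → f2 s = f2 t → s = t)
    (inj3 : ∀ s t, s ≤ n3+1 → t ≤ n3+1 → f3 s = f3 t → s = t)
    (d12 : ∀ s t, f1 s ≠ f2 t) (d13 : ∀ s t, f1 s ≠ f3 t) (d23 : ∀ s t, f2 s ≠ f3 t)
    (hcard : Fintype.card V = n1+n2+n3+6) :
    ∃ L : List V, L.Nodup ∧ (∀ v, v ∈ L) ∧
      cycleLength c L ≤ (∑ t ∈ Finset.range (n1+1), c (f1 t) (f1 (t+1)))
        + (∑ t ∈ Finset.range (n2+1), c (f2 t) (f2 (t+1)))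
        + 2 * (∑ t ∈ Finset.range (n3+1), c (f3 t) (f3 (t+1)))
        + c (f1 0) (f3 0) + c (f3 0) (f2 0) + c (f2 (n2+1)) (f1 (n1+1)) := by
  set A := (ascL f1 0 (n1+1+1)).reverse with hA
  set B := ascL f3 0 (n3+1+1) with hB
  set C := ascL f2 0 (n2+1+1) with hC
  have memA : ∀ v, v ∈ A → ∃ t, t ≤ n1+1 ∧ v = f1 t := by
    intro v hv; rw [hA, List.mem_reverse, mem_ascL] at hv
    obtain ⟨t, htl, rfl⟩ := hv; exact ⟨t, by omega, by rw [Nat.zero_add]⟩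
  have memB : ∀ v, v ∈ B → ∃ t, t ≤ n3+1 ∧ v = f3 t := by
    intro v hv; rw [hB, mem_ascL] at hv
    obtain ⟨t, htl, rfl⟩ := hv; exact ⟨t, by omega, by rw [Nat.zero_add]⟩
  have memC : ∀ v, v ∈ C → ∃ t, t ≤ n2+1 ∧ v = f2 t := by
    intro v hv; rw [hC, mem_ascL] at hv
    obtain ⟨t, htl, rfl⟩ := hv; exact ⟨t, by omega, by rw [Nat.zero_add]⟩
  have ndA : A.Nodup := List.nodup_reverse.mpr (nodup_ascL _ _ _ (fun s t hsx htx hft =>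
    by have := inj1 (0+s) (0+t) (by omega) (by omega) hft; omega))
  have ndB : B.Nodup := nodup_ascL _ _ _ (fun s t hsx htx hft => by
    have := inj3 (0+s) (0+t) (by omega) (by omega) hft; omega)
  have ndC : C.Nodup := nodup_ascL _ _ _ (fun s t hsx htx hft => by
    have := inj2 (0+s) (0+t) (by omega) (by omega) hft; omega)
  have dAB : A.Disjoint B := by
    intro v hv hv'
    obtain ⟨s, _, e1⟩ := memA v hv; obtain ⟨t, _, e2⟩ := memB v hv'
    rw [e1] at e2; exact d13 s t e2
  have dAC : A.Disjoint C := by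
    intro v hv hv'
    obtain ⟨s, _, e1⟩ := memA v hv; obtain ⟨t, _, e2⟩ := memC v hv'
    rw [e1] at e2; exact d12 s t e2
  have dBC : B.Disjoint C := by
    intro v hv hv'
    obtain ⟨s, _, e1⟩ := memB v hv; obtain ⟨t, _, e2⟩ := memC v hv'
    rw [e1] at e2; exact d23 t s e2.symm
  have hnd : (A ++ B ++ C).Nodup := by
    rw [List.nodup_append, List.nodup_append]
    refine ⟨⟨ndA, ndB, fun a ha b hb hab => dAB ha (hab ▸ hb)⟩, ndC, ?_⟩
    intro a ha b hb hab; subst hab; exact (List.disjoint_append_left.mpr ⟨dAC, dBC⟩) ha hb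
  have hlen : (A ++ B ++ C).length = Fintype.card V := by
    rw [hcard]
    simp only [List.length_append, hA, hB, hC, List.length_reverse, ascL_length]
    omega
  refine ⟨A ++ B ++ C, hnd, cover_of_nodup_length _ hnd hlen, ?_⟩
  have hhA : A.head? = some (f1 (n1+1)) := by
    rw [hA, List.head?_reverse, ascL_getLast?, Nat.zero_add]
  have hlA : A.getLast? = some (f1 0) := by
    rw [hA, List.getLast?_reverse, ascL_head?]
  have hhB : B.head? = some (f3 0) := by rw [hB]; exact ascL_head? f3 0 (n3+1)
  have hlB : B.getLast? = some (f3 (n3+1)) := by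
    rw [hB, ascL_getLast?, Nat.zero_add]
  have hhC : C.head? = some (f2 0) := by rw [hC]; exact ascL_head? f2 0 (n2+1)
  have hlC : C.getLast? = some (f2 (n2+1)) := by
    rw [hC, ascL_getLast?, Nat.zero_add]
  have pA : plen c A = ∑ t ∈ Finset.range (n1+1), c (f1 t) (f1 (t+1)) := by
    rw [hA, plen_reverse c hs, plen_ascL]; simp only [Nat.zero_add]
  have pB : plen c B = ∑ t ∈ Finset.range (n3+1), c (f3 t) (f3 (t+1)) := by
    rw [hB, plen_ascL]; simp only [Nat.zero_add]
  have pC : plen c C = ∑ t ∈ Finset.range (n2+1), c (f2 t) (f2 (t+1)) := by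
    rw [hC, plen_ascL]; simp only [Nat.zero_add]
  have hcyc : cycleLength c (A ++ B ++ C)
      = plen c A + plen c B + plen c C
        + c (f1 0) (f3 0) + c (f3 (n3+1)) (f2 0) + c (f2 (n2+1)) (f1 (n1+1)) := by
    rw [cycleLength_closed c _ (f1 (n1+1)) (f2 (n2+1))
      (head?_append_some (head?_append_some hhA)) (getLast?_append_some hlC)]
    rw [plen_append' c (A ++ B) C (f3 (n3+1)) (f2 0) (getLast?_append_some hlB) hhC]
    rw [plen_append' c A B (f1 0) (f3 0) hlA hhB]
    ring
  have ineq1 : c (f3 (n3+1)) (f2 0)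
      ≤ (∑ t ∈ Finset.range (n3+1), c (f3 t) (f3 (t+1))) + c (f3 0) (f2 0) :=
    chainB c hs ht f3 (f2 0) (n3+1)
  rw [hcyc, pA, pB, pC]
  linarith

end generic

def veq (i j k : ℕ) : (Fin (i+2) ⊕ (Fin (j+2) ⊕ Fin (k+2))) ≃ Vtype i j k where
  toFun x := x
  invFun x := x
  left_inv _ := rfl
  right_inv _ := rfl

lemma sum_vtype (i j k : ℕ) (g : Vtype i j k → ℝ) :
    ∑ v, g v = (∑ s : Fin (i+2), g (Sum.inl s))
      + ((∑ s : Fin (j+2), g (Sum.inr (Sum.inl s)))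
      + (∑ s : Fin (k+2), g (Sum.inr (Sum.inr s)))) := by
  have h := Fintype.sum_equiv (veq i j k)
    (fun x : Fin (i+2) ⊕ (Fin (j+2) ⊕ Fin (k+2)) => g (veq i j k x)) g (fun _ => rfl)
  rw [← h, Fintype.sum_sum_type]
  congr 1
  rw [Fintype.sum_sum_type]
  rfl

def vx (i j k : ℕ) (t : ℕ) : Vtype i j k := Sum.inl ⟨min t (i+1), by omega⟩
def vy (i j k : ℕ) (t : ℕ) : Vtype i j k := Sum.inr (Sum.inl ⟨min t (j+1), by omega⟩)
def vz (i j k : ℕ) (t : ℕ) : Vtype i j k := Sum.inr (Sum.inr ⟨min t (k+1), by omega⟩)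

lemma vx_coe (i j k : ℕ) (s : Fin (i+2)) : (Sum.inl s : Vtype i j k) = vx i j k ↑s := by
  unfold vx; congr 1; apply Fin.ext; simp; omega
lemma vy_coe (i j k : ℕ) (s : Fin (j+2)) :
    (Sum.inr (Sum.inl s) : Vtype i j k) = vy i j k ↑s := by
  unfold vy; congr 2; apply Fin.ext; simp; omega
lemma vz_coe (i j k : ℕ) (s : Fin (k+2)) :
    (Sum.inr (Sum.inr s) : Vtype i j k) = vz i j k ↑s := by
  unfold vz; congr 2; apply Fin.ext; simp; omega

-- sum over range with single point
lemma aux_pt (P Q a b : ℕ) (ha : a < P) (hb : b < Q) (g : ℕ → ℕ → ℝ) :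
    ∑ s ∈ Finset.range P, ∑ t ∈ Finset.range Q,
      (if s = a ∧ t = b then g s t else 0) = g a b := by
  have h1 : ∀ s, ∑ t ∈ Finset.range Q, (if s = a ∧ t = b then g s t else 0)
      = if s = a then g s b else 0 := by
    intro s
    by_cases hs : s = a
    · subst hs
      simp only [true_and, if_pos rfl]
      have := Finset.sum_ite_eq' (Finset.range Q) b (g s)
      simpa [hb] using this
    · simp [hs]
  rw [Finset.sum_congr rfl (fun s _ => h1 s)]
  have := Finset.sum_ite_eq' (Finset.range P) a (fun s => g s b)
  simpa [ha] using this

lemma aux_edge (N : ℕ) (g : ℕ → ℕ → ℝ) :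
    ∑ s ∈ Finset.range (N+2), ∑ t ∈ Finset.range (N+2),
      (if s + 1 = t then g s t else 0) = ∑ m ∈ Finset.range (N+1), g m (m+1) := by
  have h1 : ∀ s, ∑ t ∈ Finset.range (N+2), (if s + 1 = t then g s t else 0)
      = if s + 1 < N + 2 then g s (s+1) else 0 := by
    intro s
    have h2 : ∀ t, (if s + 1 = t then g s t else 0) = (if t = s+1 then g s t else 0) := by
      intro t; by_cases h : s+1 = t
      · rw [if_pos h, if_pos h.symm]
      · rw [if_neg h, if_neg (fun hh => h hh.symm)]
    rw [Finset.sum_congr rfl (fun t _ => h2 t)]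
    have := Finset.sum_ite_eq' (Finset.range (N+2)) (s+1) (g s)
    simpa using this
  rw [Finset.sum_congr rfl (fun s _ => h1 s)]
  rw [Finset.sum_range_succ]
  rw [if_neg (show ¬(N+1+1 < N+2) by omega)]
  have h3 : ∀ m ∈ Finset.range (N+1), (if m + 1 < N + 2 then g m (m+1) else 0) = g m (m+1) := by
    intro m hm; rw [Finset.mem_range] at hm; rw [if_pos (by omega)]
  rw [Finset.sum_congr rfl h3, add_zero]

lemma block_path (n : ℕ) (g : Fin (n+2) → Fin (n+2) → ℝ) (G : ℕ → ℕ → ℝ)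
    (hg : ∀ s t, g s t = g t s) (hG : ∀ s t : Fin (n+2), g s t = G ↑s ↑t)
    (hGs : ∀ s t, G s t = G t s) :
    (∑ s : Fin (n+2), ∑ t : Fin (n+2),
      g s t * (if (s:ℕ) + 1 = (t:ℕ) ∨ (t:ℕ) + 1 = (s:ℕ) then (1:ℝ) else 0))
    = 2 * ∑ m ∈ Finset.range (n+1), G m (m+1) := by
  have step1 : ∀ s t : Fin (n+2),
      g s t * (if (s:ℕ) + 1 = (t:ℕ) ∨ (t:ℕ) + 1 = (s:ℕ) then (1:ℝ) else 0)
      = (if (s:ℕ) + 1 = (t:ℕ) then G ↑s ↑t else 0)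
        + (if (t:ℕ) + 1 = (s:ℕ) then G ↑s ↑t else 0) := by
    intro s t
    rw [hG]
    by_cases h1 : (s:ℕ) + 1 = (t:ℕ)
    · by_cases h2 : (t:ℕ) + 1 = (s:ℕ)
      · exfalso; omega
      · simp [h1, h2]
    · by_cases h2 : (t:ℕ) + 1 = (s:ℕ)
      · simp [h1, h2]
      · simp [h1, h2]
  simp_rw [step1, Finset.sum_add_distrib]
  rw [Fin.sum_univ_eq_sum_range
    (fun s => ∑ t : Fin (n+2), (if s + 1 = (t:ℕ) then G s ↑t else 0))]
  rw [Fin.sum_univ_eq_sum_range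
    (fun s => ∑ t : Fin (n+2), (if (t:ℕ) + 1 = s then G s ↑t else 0))]
  have e1 : ∀ s ∈ Finset.range (n+2),
      (∑ t : Fin (n+2), (if s + 1 = (t:ℕ) then G s ↑t else 0))
      = ∑ t ∈ Finset.range (n+2), (if s + 1 = t then G s t else 0) :=
    fun s _ => Fin.sum_univ_eq_sum_range (fun t => if s + 1 = t then G s t else 0) (n+2)
  have e2 : ∀ s ∈ Finset.range (n+2),
      (∑ t : Fin (n+2), (if (t:ℕ) + 1 = s then G s ↑t else 0))
      = ∑ t ∈ Finset.range (n+2), (if t + 1 = s then G s t else 0) :=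
    fun s _ => Fin.sum_univ_eq_sum_range (fun t => if t + 1 = s then G s t else 0) (n+2)
  rw [Finset.sum_congr rfl e1, Finset.sum_congr rfl e2]
  rw [aux_edge n G]
  have : ∑ s ∈ Finset.range (n+2), ∑ t ∈ Finset.range (n+2),
      (if t + 1 = s then G s t else 0) = ∑ m ∈ Finset.range (n+1), G m (m+1) := by
    rw [Finset.sum_comm]
    rw [aux_edge n (fun t s => G s t)]
    exact Finset.sum_congr rfl (fun m _ => hGs (m+1) m)
  rw [this]
  ring

lemma block_tri (p q : ℕ) (g : Fin (p+2) → Fin (q+2) → ℝ) (G : ℕ → ℕ → ℝ)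
    (hG : ∀ s t, g s t = G ↑s ↑t) :
    (∑ s : Fin (p+2), ∑ t : Fin (q+2),
      g s t * (if ((s:ℕ) = 0 ∧ (t:ℕ) = 0) ∨ ((s:ℕ) = p + 1 ∧ (t:ℕ) = q + 1)
        then (1:ℝ)/2 else 0))
    = (G 0 0 + G (p+1) (q+1)) / 2 := by
  have step1 : ∀ (s : Fin (p+2)) (t : Fin (q+2)),
      g s t * (if ((s:ℕ) = 0 ∧ (t:ℕ) = 0) ∨ ((s:ℕ) = p + 1 ∧ (t:ℕ) = q + 1)
        then (1:ℝ)/2 else 0)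
      = (if (s:ℕ) = 0 ∧ (t:ℕ) = 0 then G ↑s ↑t else 0) / 2
        + (if (s:ℕ) = p+1 ∧ (t:ℕ) = q+1 then G ↑s ↑t else 0) / 2 := by
    intro s t
    rw [hG]
    by_cases h1 : (s:ℕ) = 0 ∧ (t:ℕ) = 0
    · by_cases h2 : (s:ℕ) = p+1 ∧ (t:ℕ) = q+1
      · exfalso; omega
      · simp [h1, h2]; ring
    · by_cases h2 : (s:ℕ) = p+1 ∧ (t:ℕ) = q+1
      · simp [h1, h2]; ring
      · rw [if_neg (not_or.mpr ⟨h1, h2⟩), if_neg h1, if_neg h2]; ring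
  simp_rw [step1, Finset.sum_add_distrib, ← Finset.sum_div]
  rw [Fin.sum_univ_eq_sum_range
    (fun s => ∑ t : Fin (q+2), (if s = 0 ∧ (t:ℕ) = 0 then G s ↑t else 0))]
  rw [Fin.sum_univ_eq_sum_range
    (fun s => ∑ t : Fin (q+2), (if s = p+1 ∧ (t:ℕ) = q+1 then G s ↑t else 0))]
  have e1 : ∀ s ∈ Finset.range (p+2),
      (∑ t : Fin (q+2), (if s = 0 ∧ (t:ℕ) = 0 then G s ↑t else 0))
      = ∑ t ∈ Finset.range (q+2), (if s = 0 ∧ t = 0 then G s t else 0) :=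
    fun s _ => Fin.sum_univ_eq_sum_range (fun t => if s = 0 ∧ t = 0 then G s t else 0) (q+2)
  have e2 : ∀ s ∈ Finset.range (p+2),
      (∑ t : Fin (q+2), (if s = p+1 ∧ (t:ℕ) = q+1 then G s ↑t else 0))
      = ∑ t ∈ Finset.range (q+2), (if s = p+1 ∧ t = q+1 then G s t else 0) :=
    fun s _ => Fin.sum_univ_eq_sum_range
      (fun t => if s = p+1 ∧ t = q+1 then G s t else 0) (q+2)
  rw [Finset.sum_congr rfl e1, Finset.sum_congr rfl e2]
  rw [aux_pt (p+2) (q+2) 0 0 (by omega) (by omega) G,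
    aux_pt (p+2) (q+2) (p+1) (q+1) (by omega) (by omega) G]
  ring

lemma block_tri' (p q : ℕ) (g : Fin (p+2) → Fin (q+2) → ℝ) (G : ℕ → ℕ → ℝ)
    (hG : ∀ s t, g s t = G ↑s ↑t) :
    (∑ s : Fin (p+2), ∑ t : Fin (q+2),
      g s t * (if ((t:ℕ) = 0 ∧ (s:ℕ) = 0) ∨ ((t:ℕ) = q + 1 ∧ (s:ℕ) = p + 1)
        then (1:ℝ)/2 else 0))
    = (G 0 0 + G (p+1) (q+1)) / 2 := by
  have hcomm : ∀ (s : Fin (p+2)) (t : Fin (q+2)),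
      ((((t:ℕ) = 0 ∧ (s:ℕ) = 0) ∨ ((t:ℕ) = q + 1 ∧ (s:ℕ) = p + 1)))
      = (((s:ℕ) = 0 ∧ (t:ℕ) = 0) ∨ ((s:ℕ) = p + 1 ∧ (t:ℕ) = q + 1)) := by
    intro s t; apply propext
    constructor <;> (rintro (⟨h1, h2⟩ | ⟨h1, h2⟩); exacts [Or.inl ⟨h2, h1⟩, Or.inr ⟨h2, h1⟩])
  simp_rw [hcomm]
  exact block_tri p q g G hG

lemma lpCost_xfrac (i j k : ℕ) (c : Vtype i j k → Vtype i j k → ℝ)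
    (hsymm : ∀ v w, c v w = c w v) :
    lpCost c (xfrac i j k)
      = (∑ t ∈ Finset.range (i+1), c (vx i j k t) (vx i j k (t+1)))
      + (∑ t ∈ Finset.range (j+1), c (vy i j k t) (vy i j k (t+1)))
      + (∑ t ∈ Finset.range (k+1), c (vz i j k t) (vz i j k (t+1)))
      + (c (vx i j k 0) (vy i j k 0) + c (vx i j k 0) (vz i j k 0)
        + c (vy i j k 0) (vz i j k 0) + c (vx i j k (i+1)) (vy i j k (j+1))
        + c (vx i j k (i+1)) (vz i j k (k+1)) + c (vy i j k (j+1)) (vz i j k (k+1))) / 2 := by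
  rw [lpCost]
  rw [sum_vtype i j k (fun v => ∑ w, c v w * xfrac i j k v w)]
  simp only [sum_vtype i j k, xfrac]
  simp only [Finset.sum_add_distrib]
  rw [block_path i (fun s t => c (Sum.inl s) (Sum.inl t))
    (fun a b => c (vx i j k a) (vx i j k b))
    (fun s t => hsymm _ _) (fun s t => by simp only [vx_coe, vy_coe, vz_coe])
    (fun a b => hsymm _ _)]
  rw [block_path j (fun s t => c (Sum.inr (Sum.inl s)) (Sum.inr (Sum.inl t)))
    (fun a b => c (vy i j k a) (vy i j k b))
    (fun s t => hsymm _ _) (fun s t => by simp only [vx_coe, vy_coe, vz_coe])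
    (fun a b => hsymm _ _)]
  rw [block_path k (fun s t => c (Sum.inr (Sum.inr s)) (Sum.inr (Sum.inr t)))
    (fun a b => c (vz i j k a) (vz i j k b))
    (fun s t => hsymm _ _) (fun s t => by simp only [vx_coe, vy_coe, vz_coe])
    (fun a b => hsymm _ _)]
  rw [block_tri i j (fun s t => c (Sum.inl s) (Sum.inr (Sum.inl t)))
    (fun a b => c (vx i j k a) (vy i j k b))
    (fun s t => by simp only [vx_coe, vy_coe, vz_coe])]
  rw [block_tri i k (fun s t => c (Sum.inl s) (Sum.inr (Sum.inr t)))
    (fun a b => c (vx i j k a) (vz i j k b))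
    (fun s t => by simp only [vx_coe, vy_coe, vz_coe])]
  rw [block_tri j k (fun s t => c (Sum.inr (Sum.inl s)) (Sum.inr (Sum.inr t)))
    (fun a b => c (vy i j k a) (vz i j k b))
    (fun s t => by simp only [vx_coe, vy_coe, vz_coe])]
  rw [block_tri' j i (fun s t => c (Sum.inr (Sum.inl s)) (Sum.inl t))
    (fun a b => c (vy i j k a) (vx i j k b))
    (fun s t => by simp only [vx_coe, vy_coe, vz_coe])]
  rw [block_tri' k i (fun s t => c (Sum.inr (Sum.inr s)) (Sum.inl t))
    (fun a b => c (vz i j k a) (vx i j k b))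
    (fun s t => by simp only [vx_coe, vy_coe, vz_coe])]
  rw [block_tri' k j (fun s t => c (Sum.inr (Sum.inr s)) (Sum.inr (Sum.inl t)))
    (fun a b => c (vz i j k a) (vy i j k b))
    (fun s t => by simp only [vx_coe, vy_coe, vz_coe])]
  rw [hsymm (vy i j k 0) (vx i j k 0), hsymm (vy i j k (j+1)) (vx i j k (i+1)),
    hsymm (vz i j k 0) (vx i j k 0), hsymm (vz i j k (k+1)) (vx i j k (i+1)),
    hsymm (vz i j k 0) (vy i j k 0), hsymm (vz i j k (k+1)) (vy i j k (j+1))]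
  ring

set_option maxHeartbeats 1000000 in
lemma final_algebra (I J K PX PY PZ t1 t2 t3 t4 t5 t6 B LP : ℝ)
    (hI : 0 < I) (hJ : 0 < J) (hK : 0 < K)
    (hLP : LP = PX+PY+PZ+(t1+t2+t3+t4+t5+t6)/2)
    (hB : B = (1 + 1/(3+2*(1/I+1/J+1/K))) * LP)
    (A1 : I*B < I*(PY+PZ+2*PX+(t4+t5+t2+t1)) - 2*PX)
    (A2 : J*B < J*(PZ+PX+2*PY+(t6+t4+t1+t3)) - 2*PY)
    (A3 : K*B < K*(PX+PY+2*PZ+(t5+t6+t3+t2)) - 2*PZ)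
    (B1 : B < PY+PZ+2*PX+t4+t5+t3) (B2 : B < PY+PZ+2*PX+t1+t2+t6)
    (B3 : B < PZ+PX+2*PY+t6+t4+t2) (B4 : B < PZ+PX+2*PY+t3+t1+t5)
    (B5 : B < PX+PY+2*PZ+t5+t6+t1) (B6 : B < PX+PY+2*PZ+t2+t3+t4) : False := by
  have hD : (0:ℝ) < 3+2*(1/I+1/J+1/K) := by positivity
  have hJK : (0:ℝ) < J*K := by positivity
  have hIK : (0:ℝ) < I*K := by positivity
  have hIJ : (0:ℝ) < I*J := by positivity
  have E : (3*I*J*K+2*(J*K+I*K+I*J))*B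
      = (4*I*J*K+2*(J*K+I*K+I*J))*(PX+PY+PZ+(t1+t2+t3+t4+t5+t6)/2) := by
    have hDn : (3*I*J*K+2*(J*K+I*K+I*J)) = I*J*K*(3+2*(1/I+1/J+1/K)) := by
      field_simp
    rw [hB, hLP, hDn]
    have : I*J*K*(3+2*(1/I+1/J+1/K)) * ((1 + 1/(3+2*(1/I+1/J+1/K))) * (PX+PY+PZ+(t1+t2+t3+t4+t5+t6)/2))
        = (I*J*K*((3+2*(1/I+1/J+1/K)) * (1 + 1/(3+2*(1/I+1/J+1/K))))) * (PX+PY+PZ+(t1+t2+t3+t4+t5+t6)/2) := by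
      ring
    rw [this]
    have h2 : (3+2*(1/I+1/J+1/K)) * (1 + 1/(3+2*(1/I+1/J+1/K))) = (3+2*(1/I+1/J+1/K)) + 1 := by
      rw [mul_add, mul_one, mul_one_div, div_self (ne_of_gt hD)]
    rw [h2]
    have h3 : I*J*K*(3+2*(1/I+1/J+1/K)+1) = 4*I*J*K+2*(J*K+I*K+I*J) := by
      field_simp
      ring
    rw [h3]
  linarith [(mul_lt_mul_iff_right₀ hJK).mpr A1, (mul_lt_mul_iff_right₀ hJK).mpr (add_lt_add B1 B2),
    (mul_lt_mul_iff_right₀ hIK).mpr A2, (mul_lt_mul_iff_right₀ hIK).mpr (add_lt_add B3 B4),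
    (mul_lt_mul_iff_right₀ hIJ).mpr A3, (mul_lt_mul_iff_right₀ hIJ).mpr (add_lt_add B5 B6), E]


lemma card_vtype (i j k : ℕ) : Fintype.card (Vtype i j k) = i + j + k + 6 := by
  rw [← Fintype.card_congr (veq i j k)]
  simp
  omega

lemma vx_inj (i j k : ℕ) : ∀ s t, s ≤ i+1 → t ≤ i+1 → vx i j k s = vx i j k t → s = t := by
  intro s t hs ht h
  unfold vx at h
  replace h := Fin.mk.inj_iff.mp (Sum.inl.inj h)
  omega

lemma vy_inj (i j k : ℕ) : ∀ s t, s ≤ j+1 → t ≤ j+1 → vy i j k s = vy i j k t → s = t := by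
  intro s t hs ht h
  unfold vy at h
  replace h := Fin.mk.inj_iff.mp (Sum.inl.inj (Sum.inr.inj h))
  omega

lemma vz_inj (i j k : ℕ) : ∀ s t, s ≤ k+1 → t ≤ k+1 → vz i j k s = vz i j k t → s = t := by
  intro s t hs ht h
  unfold vz at h
  replace h := Fin.mk.inj_iff.mp (Sum.inr.inj (Sum.inr.inj h))
  omega

lemma vx_ne_vy (i j k : ℕ) : ∀ s t, vx i j k s ≠ vy i j k t := by
  intro s t h; unfold vx vy at h; exact Sum.inl_ne_inr h

lemma vx_ne_vz (i j k : ℕ) : ∀ s t, vx i j k s ≠ vz i j k t := by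
  intro s t h; unfold vx vz at h; exact Sum.inl_ne_inr h

lemma vy_ne_vz (i j k : ℕ) : ∀ s t, vy i j k s ≠ vz i j k t := by
  intro s t h; unfold vy vz at h; replace h := Sum.inr.inj h; exact Sum.inl_ne_inr h

/-- A metric TSP instance whose optimal fractional subtour-LP solution is (isomorphic to)
`x_{i,j,k}` has integrality ratio at most `1 + 1/(3 + 2(1/(i+1) + 1/(j+1) + 1/(k+1)))`. -/
theorem metric_integrality_ratio_bound (i j k : ℕ)
    (c : Vtype i j k → Vtype i j k → ℝ)
    (hsymm : ∀ v w, c v w = c w v) (hdiag : ∀ v, c v v = 0)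
    (hnonneg : ∀ v w, 0 ≤ c v w)
    (htri : ∀ u v w, c u w ≤ c u v + c v w)
    (hfeas : SubtourFeasible (xfrac i j k))
    (hopt : ∀ y : Vtype i j k → Vtype i j k → ℝ, SubtourFeasible y →
      lpCost c (xfrac i j k) ≤ lpCost c y) :
    ∃ L : List (Vtype i j k), L.Nodup ∧ (∀ v, v ∈ L) ∧
      cycleLength c L ≤
        (1 + 1 / (3 + 2 * (1 / ((i : ℝ) + 1) + 1 / ((j : ℝ) + 1) + 1 / ((k : ℝ) + 1)))) *
          lpCost c (xfrac i j k) := by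
  by_contra hcon
  push_neg at hcon
  have hcard := card_vtype i j k
  have hcard2 : Fintype.card (Vtype i j k) = j + k + i + 6 := by rw [hcard]; omega
  have hcard3 : Fintype.card (Vtype i j k) = k + i + j + 6 := by rw [hcard]; omega
  have ix := vx_inj i j k
  have iy := vy_inj i j k
  have iz := vz_inj i j k
  have dxy := vx_ne_vy i j k
  have dxz := vx_ne_vz i j k
  have dyz := vy_ne_vz i j k
  have dyx : ∀ s t, vy i j k s ≠ vx i j k t := fun s t h => dxy t s h.symm
  have dzx : ∀ s t, vz i j k s ≠ vx i j k t := fun s t h => dxz t s h.symm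
  have dzy : ∀ s t, vz i j k s ≠ vy i j k t := fun s t h => dyz t s h.symm
  set LPc := lpCost c (xfrac i j k) with hLPc
  set SX := ∑ t ∈ Finset.range (i+1), c (vx i j k t) (vx i j k (t+1)) with hSX
  set SY := ∑ t ∈ Finset.range (j+1), c (vy i j k t) (vy i j k (t+1)) with hSY
  set SZ := ∑ t ∈ Finset.range (k+1), c (vz i j k t) (vz i j k (t+1)) with hSZ
  set u1 := c (vx i j k 0) (vy i j k 0) with hu1
  set u2 := c (vx i j k 0) (vz i j k 0) with hu2
  set u3 := c (vy i j k 0) (vz i j k 0) with hu3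
  set u4 := c (vx i j k (i+1)) (vy i j k (j+1)) with hu4
  set u5 := c (vx i j k (i+1)) (vz i j k (k+1)) with hu5
  set u6 := c (vy i j k (j+1)) (vz i j k (k+1)) with hu6
  set Bnd := (1 + 1 / (3 + 2 * (1 / ((i : ℝ) + 1) + 1 / ((j : ℝ) + 1) + 1 / ((k : ℝ) + 1)))) * LPc
    with hBnd
  have hLP : LPc = SX + SY + SZ + (u1+u2+u3+u4+u5+u6)/2 := by
    rw [hLPc, hSX, hSY, hSZ, hu1, hu2, hu3, hu4, hu5, hu6]
    exact lpCost_xfrac i j k c hsymm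
  have hEX : ∀ m ∈ Finset.range (i+1),
      Bnd < SY + SZ + 2*SX - 2*c (vx i j k m) (vx i j k (m+1)) + (u4 + u5 + u2 + u1) := by
    intro m hm
    rw [Finset.mem_range] at hm
    obtain ⟨L, h1, h2, h3⟩ := gapCycle c (vx i j k) (vy i j k) (vz i j k) i j k hsymm htri
      ix iy iz dxy dxz dyz hcard m (by omega)
    have h4 := lt_of_lt_of_le (hcon L h1 h2) h3
    rw [hsymm (vy i j k (j+1)) (vx i j k (i+1)), hsymm (vz i j k 0) (vx i j k 0)] at h4
    rw [← hSX, ← hSY, ← hSZ, ← hu1, ← hu2, ← hu4, ← hu5] at h4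
    linarith [h4]
  have hEY : ∀ m ∈ Finset.range (j+1),
      Bnd < SZ + SX + 2*SY - 2*c (vy i j k m) (vy i j k (m+1)) + (u6 + u4 + u1 + u3) := by
    intro m hm
    rw [Finset.mem_range] at hm
    obtain ⟨L, h1, h2, h3⟩ := gapCycle c (vy i j k) (vz i j k) (vx i j k) j k i hsymm htri
      iy iz ix dyz dyx dzx hcard2 m (by omega)
    have h4 := lt_of_lt_of_le (hcon L h1 h2) h3
    rw [hsymm (vz i j k (k+1)) (vy i j k (j+1)), hsymm (vy i j k (j+1)) (vx i j k (i+1))] at h4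
    rw [← hSX, ← hSY, ← hSZ, ← hu1, ← hu3, ← hu4, ← hu6] at h4
    linarith [h4]
  have hEZ : ∀ m ∈ Finset.range (k+1),
      Bnd < SX + SY + 2*SZ - 2*c (vz i j k m) (vz i j k (m+1)) + (u5 + u6 + u3 + u2) := by
    intro m hm
    rw [Finset.mem_range] at hm
    obtain ⟨L, h1, h2, h3⟩ := gapCycle c (vz i j k) (vx i j k) (vy i j k) k i j hsymm htri
      iz ix iy dzx dzy dxy hcard3 m (by omega)
    have h4 := lt_of_lt_of_le (hcon L h1 h2) h3
    rw [hsymm (vz i j k (k+1)) (vy i j k (j+1)), hsymm (vz i j k 0) (vx i j k 0)] at h4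
    rw [← hSX, ← hSY, ← hSZ, ← hu2, ← hu3, ← hu5, ← hu6] at h4
    linarith [h4]
  have hB5 : Bnd < SX + SY + 2*SZ + u5 + u6 + u1 := by
    obtain ⟨L, h1, h2, h3⟩ := primeCycle c (vx i j k) (vy i j k) (vz i j k) i j k hsymm htri
      ix iy iz dxy dxz dyz hcard
    have h4 := lt_of_lt_of_le (hcon L h1 h2) h3
    rw [hsymm (vz i j k (k+1)) (vy i j k (j+1)), hsymm (vy i j k 0) (vx i j k 0)] at h4
    rw [← hSX, ← hSY, ← hSZ, ← hu1, ← hu5, ← hu6] at h4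
    linarith [h4]
  have hB6 : Bnd < SX + SY + 2*SZ + u2 + u3 + u4 := by
    obtain ⟨L, h1, h2, h3⟩ := doublePrimeCycle c (vx i j k) (vy i j k) (vz i j k) i j k
      hsymm htri ix iy iz dxy dxz dyz hcard
    have h4 := lt_of_lt_of_le (hcon L h1 h2) h3
    rw [hsymm (vz i j k 0) (vy i j k 0), hsymm (vy i j k (j+1)) (vx i j k (i+1))] at h4
    rw [← hSX, ← hSY, ← hSZ, ← hu2, ← hu3, ← hu4] at h4
    linarith [h4]
  have hB1 : Bnd < SY + SZ + 2*SX + u4 + u5 + u3 := by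
    obtain ⟨L, h1, h2, h3⟩ := primeCycle c (vy i j k) (vz i j k) (vx i j k) j k i hsymm htri
      iy iz ix dyz dyx dzx hcard2
    have h4 := lt_of_lt_of_le (hcon L h1 h2) h3
    rw [hsymm (vy i j k (j+1)) (vx i j k (i+1)), hsymm (vz i j k 0) (vy i j k 0)] at h4
    rw [← hSX, ← hSY, ← hSZ, ← hu3, ← hu4, ← hu5] at h4
    linarith [h4]
  have hB2 : Bnd < SY + SZ + 2*SX + u1 + u2 + u6 := by
    obtain ⟨L, h1, h2, h3⟩ := doublePrimeCycle c (vy i j k) (vz i j k) (vx i j k) j k i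
      hsymm htri iy iz ix dyz dyx dzx hcard2
    have h4 := lt_of_lt_of_le (hcon L h1 h2) h3
    rw [hsymm (vy i j k 0) (vx i j k 0), hsymm (vz i j k (k+1)) (vy i j k (j+1))] at h4
    rw [← hSX, ← hSY, ← hSZ, ← hu1, ← hu2, ← hu6] at h4
    linarith [h4]
  have hB3 : Bnd < SZ + SX + 2*SY + u6 + u4 + u2 := by
    obtain ⟨L, h1, h2, h3⟩ := primeCycle c (vz i j k) (vx i j k) (vy i j k) k i j hsymm htri
      iz ix iy dzx dzy dxy hcard3
    have h4 := lt_of_lt_of_le (hcon L h1 h2) h3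
    rw [hsymm (vz i j k (k+1)) (vy i j k (j+1)), hsymm (vy i j k (j+1)) (vx i j k (i+1))] at h4
    rw [← hSX, ← hSY, ← hSZ, ← hu2, ← hu4, ← hu6] at h4
    linarith [h4]
  have hB4 : Bnd < SZ + SX + 2*SY + u3 + u1 + u5 := by
    obtain ⟨L, h1, h2, h3⟩ := doublePrimeCycle c (vz i j k) (vx i j k) (vy i j k) k i j
      hsymm htri iz ix iy dzx dzy dxy hcard3
    have h4 := lt_of_lt_of_le (hcon L h1 h2) h3
    rw [hsymm (vz i j k 0) (vy i j k 0), hsymm (vy i j k 0) (vx i j k 0)] at h4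
    rw [← hSX, ← hSY, ← hSZ, ← hu1, ← hu3, ← hu5] at h4
    linarith [h4]
  have A1 : ((i:ℝ)+1) * Bnd < ((i:ℝ)+1)*(SY+SZ+2*SX+(u4+u5+u2+u1)) - 2*SX := by
    have base := Finset.sum_lt_sum_of_nonempty
      (Finset.nonempty_range_iff.mpr (Nat.succ_ne_zero i)) hEX
    rw [Finset.sum_const, Finset.card_range] at base
    have congrg : ∀ m ∈ Finset.range (i+1),
        SY + SZ + 2*SX - 2*c (vx i j k m) (vx i j k (m+1)) + (u4 + u5 + u2 + u1)
        = (SY+SZ+2*SX+(u4+u5+u2+u1)) - 2*c (vx i j k m) (vx i j k (m+1)) := fun m _ => by ring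
    rw [Finset.sum_congr rfl congrg, Finset.sum_sub_distrib, Finset.sum_const,
      Finset.card_range, ← Finset.mul_sum, ← hSX, nsmul_eq_mul, nsmul_eq_mul] at base
    push_cast at base
    exact base
  have A2 : ((j:ℝ)+1) * Bnd < ((j:ℝ)+1)*(SZ+SX+2*SY+(u6+u4+u1+u3)) - 2*SY := by
    have base := Finset.sum_lt_sum_of_nonempty
      (Finset.nonempty_range_iff.mpr (Nat.succ_ne_zero j)) hEY
    rw [Finset.sum_const, Finset.card_range] at base
    have congrg : ∀ m ∈ Finset.range (j+1),
        SZ + SX + 2*SY - 2*c (vy i j k m) (vy i j k (m+1)) + (u6 + u4 + u1 + u3)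
        = (SZ+SX+2*SY+(u6+u4+u1+u3)) - 2*c (vy i j k m) (vy i j k (m+1)) := fun m _ => by ring
    rw [Finset.sum_congr rfl congrg, Finset.sum_sub_distrib, Finset.sum_const,
      Finset.card_range, ← Finset.mul_sum, ← hSY, nsmul_eq_mul, nsmul_eq_mul] at base
    push_cast at base
    exact base
  have A3 : ((k:ℝ)+1) * Bnd < ((k:ℝ)+1)*(SX+SY+2*SZ+(u5+u6+u3+u2)) - 2*SZ := by
    have base := Finset.sum_lt_sum_of_nonempty
      (Finset.nonempty_range_iff.mpr (Nat.succ_ne_zero k)) hEZ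
    rw [Finset.sum_const, Finset.card_range] at base
    have congrg : ∀ m ∈ Finset.range (k+1),
        SX + SY + 2*SZ - 2*c (vz i j k m) (vz i j k (m+1)) + (u5 + u6 + u3 + u2)
        = (SX+SY+2*SZ+(u5+u6+u3+u2)) - 2*c (vz i j k m) (vz i j k (m+1)) := fun m _ => by ring
    rw [Finset.sum_congr rfl congrg, Finset.sum_sub_distrib, Finset.sum_const,
      Finset.card_range, ← Finset.mul_sum, ← hSZ, nsmul_eq_mul, nsmul_eq_mul] at base
    push_cast at base
    exact base
  exact final_algebra ((i:ℝ)+1) ((j:ℝ)+1) ((k:ℝ)+1) SX SY SZ u1 u2 u3 u4 u5 u6 Bnd LPc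
    (by positivity) (by positivity) (by positivity) hLP hBnd A1 A2 A3 hB1 hB2 hB3 hB4 hB5 hB6
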